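/- Let H be a connected unweighted graph, let Γ = H, and let G be the edgeless graph on V(H) (weighted by d_Γ on any edges that get added). Then for any set T of edges with T ⊆ E(Γ): the subgraph H' = (V(H), T) satisfies d_{H'}(u,v) ≤ 2·d_H(u,v) for all u,v if and only if G+T has dilation at most 2 with respect to Γ. Moreover, if T is a minimal dilation 2-augmentation set for (G,Γ), then T ⊆ E(Γ). -/

import Mathlib

open SimpleGraph

/-- The weight of a walk in `G`, where each edge `uv` is weighted by the
shortest-path distance `Γ.dist u v` in the (unweighted) graph `Γ`. -/
noncomputable def walkWeight {V : Type*} (Γ G : SimpleGraph V) :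
    {x y : V} → G.Walk x y → ℕ
  | x, _, .cons (v := v) _ p => Γ.dist x v + walkWeight Γ G p
  | _, _, .nil => 0

/-- Weighted shortest-path distance in `G`, with edge weights `Γ.dist`;
`⊤` if there is no walk. -/
noncomputable def wdist {V : Type*} (Γ G : SimpleGraph V) (x y : V) : ℕ∞ :=
  ⨅ p : G.Walk x y, (walkWeight Γ G p : ℕ∞)

section Aux

variable {V : Type*} (Γ G : SimpleGraph V)

lemma wdist_le_walk {x y : V} (p : G.Walk x y) :
    wdist Γ G x y ≤ (walkWeight Γ G p : ℕ∞) :=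
  iInf_le _ p

lemma walkWeight_append {x y z : V} (p : G.Walk x y) (q : G.Walk y z) :
    walkWeight Γ G (p.append q) = walkWeight Γ G p + walkWeight Γ G q := by
  induction p with
  | nil => simp [walkWeight]
  | cons h p ih => simp only [SimpleGraph.Walk.cons_append, walkWeight, ih]; ring

lemma wdist_exists {x y : V} (h : wdist Γ G x y ≠ ⊤) :
    ∃ p : G.Walk x y, (walkWeight Γ G p : ℕ∞) = wdist Γ G x y := by
  have hne : Nonempty (G.Walk x y) := by
    by_contra hemp
    rw [not_nonempty_iff] at hemp
    exact h (by simp [wdist, iInf_of_empty])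
  classical
  refine ⟨Function.argmin (walkWeight Γ G), ?_⟩
  refine le_antisymm ?_ (iInf_le _ _)
  refine le_iInf fun p => ?_
  exact_mod_cast Function.argmin_le (walkWeight Γ G) p

lemma wdist_triangle (x y z : V) :
    wdist Γ G x z ≤ wdist Γ G x y + wdist Γ G y z := by
  rcases eq_or_ne (wdist Γ G x y) ⊤ with h1 | h1
  · simp [h1]
  rcases eq_or_ne (wdist Γ G y z) ⊤ with h2 | h2
  · simp [h2]
  obtain ⟨p, hp⟩ := wdist_exists Γ G h1
  obtain ⟨q, hq⟩ := wdist_exists Γ G h2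
  calc wdist Γ G x z ≤ (walkWeight Γ G (p.append q) : ℕ∞) := wdist_le_walk _ _ _
    _ = (walkWeight Γ G p : ℕ∞) + (walkWeight Γ G q : ℕ∞) := by
        rw [walkWeight_append]; push_cast; rfl
    _ = _ := by rw [hp, hq]

lemma walkWeight_transfer {G' : SimpleGraph V} {x y : V} (p : G.Walk x y)
    (h : ∀ e ∈ p.edges, e ∈ G'.edgeSet) :
    walkWeight Γ G' (p.transfer G' h) = walkWeight Γ G p := by
  induction p with
  | nil => simp [SimpleGraph.Walk.transfer, walkWeight]
  | cons h p ih => simp [SimpleGraph.Walk.transfer, walkWeight, ih]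

/-- If `T ≤ Γ` then every edge of a walk in `T` has `Γ`-weight 1. -/
lemma walkWeight_eq_length {T : SimpleGraph V} (hTH : T ≤ Γ) {x y : V} (p : T.Walk x y) :
    walkWeight Γ T p = p.length := by
  induction p with
  | nil => simp [walkWeight]
  | cons h p ih =>
      have : Γ.dist _ _ = 1 := SimpleGraph.dist_eq_one_iff_adj.2 (hTH h)
      simp only [walkWeight, ih, this, SimpleGraph.Walk.length_cons]
      omega

lemma length_le_walkWeight (hconn : Γ.Connected) {x y : V} (p : G.Walk x y) :
    p.length ≤ walkWeight Γ G p := by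
  induction p with
  | nil => simp [walkWeight]
  | cons h p ih =>
      have h1 : 1 ≤ Γ.dist _ _ := hconn.pos_dist_of_ne h.ne
      simp only [SimpleGraph.Walk.length_cons, walkWeight]
      omega

lemma edge_weight_le_walkWeight {a b x y : V} (p : G.Walk x y)
    (hmem : s(a, b) ∈ p.edges) : Γ.dist a b ≤ walkWeight Γ G p := by
  induction p with
  | nil => simp at hmem
  | @cons u w z h p ih =>
      simp only [SimpleGraph.Walk.edges_cons, List.mem_cons] at hmem
      rcases hmem with heq | hmem
      · rw [Sym2.eq_iff] at heq
        have : Γ.dist a b = Γ.dist u w := by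
          rcases heq with ⟨rfl, rfl⟩ | ⟨rfl, rfl⟩
          · rfl
          · exact SimpleGraph.dist_comm ..
        rw [this]; simp [walkWeight]
      · have := ih hmem
        simp only [walkWeight]; omega

/-- A walk of weight `≤ 2` containing an edge of weight `≥ 2` is that single edge. -/
lemma eq_single_edge (hconn : Γ.Connected) {a b x y : V} (p : G.Walk x y)
    (hw : walkWeight Γ G p ≤ 2) (hmem : s(a, b) ∈ p.edges) (hab : 2 ≤ Γ.dist a b) :
    s(x, y) = s(a, b) := by
  induction p with
  | nil => simp at hmem
  | @cons u w z h p ih =>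
      simp only [SimpleGraph.Walk.edges_cons, List.mem_cons] at hmem
      simp only [walkWeight] at hw
      rcases hmem with heq | hmem
      · have hduw : Γ.dist a b = Γ.dist u w := by
          rw [Sym2.eq_iff] at heq
          rcases heq with ⟨rfl, rfl⟩ | ⟨rfl, rfl⟩
          · rfl
          · exact SimpleGraph.dist_comm ..
        have hlen : p.length = 0 := by
          have := length_le_walkWeight Γ G hconn p
          omega
        have hwz : w = z := SimpleGraph.Walk.eq_of_length_eq_zero (p := p) hlen
        subst hwz
        exact heq.symm
      · exfalso
        have h2 : 2 ≤ walkWeight Γ G p := le_trans hab (edge_weight_le_walkWeight Γ G p hmem)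
        have h1 : 1 ≤ Γ.dist u w := hconn.pos_dist_of_ne h.ne
        omega

/-- From the per-edge bound to the global dilation bound. -/
lemma wdist_le_two_mul (hconn : Γ.Connected)
    (hedge : ∀ u v : V, Γ.Adj u v → wdist Γ G u v ≤ 2) (u v : V) :
    wdist Γ G u v ≤ (2 : ℕ∞) * (Γ.dist u v : ℕ∞) := by
  obtain ⟨p, hp⟩ := hconn.exists_walk_length_eq_dist u v
  rw [← hp]
  clear hp
  induction p with
  | nil =>
      rename_i a
      have : wdist Γ G a a ≤ ((walkWeight Γ G (SimpleGraph.Walk.nil : G.Walk a a) : ℕ) : ℕ∞) :=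
        wdist_le_walk Γ G _
      simpa [walkWeight] using this
  | @cons a w b h p ih =>
      calc wdist Γ G a b ≤ wdist Γ G a w + wdist Γ G w b := wdist_triangle Γ G a w b
        _ ≤ 2 + 2 * (p.length : ℕ∞) := add_le_add (hedge _ _ h) ih
        _ = 2 * (((SimpleGraph.Walk.cons h p).length : ℕ) : ℕ∞) := by
            simp only [SimpleGraph.Walk.length_cons]
            push_cast
            ring

end Aux

/-- For the empty graph `G = ⊥` over the metric of a connected graph `H = Γ`:
a subset `T ⊆ E(H)` is a `2`-spanner of `H` iff `⊥ + T` has dilation at most `2`;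
moreover any minimal dilation `2`-augmentation set `T` satisfies `T ⊆ E(H)`. -/
theorem spanner_iff_dilation_for_empty_graph {V : Type*} [Fintype V]
    (H : SimpleGraph V) (hconn : H.Connected) :
    (∀ T : SimpleGraph V, T ≤ H →
      ((∀ u v : V, T.Reachable u v ∧ T.dist u v ≤ 2 * H.dist u v) ↔
        (∀ u v : V, wdist H ((⊥ : SimpleGraph V) ⊔ T) u v ≤
          (2 : ℕ∞) * (H.dist u v : ℕ∞)))) ∧
    (∀ T : SimpleGraph V,
      (∀ u v : V, wdist H ((⊥ : SimpleGraph V) ⊔ T) u v ≤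
        (2 : ℕ∞) * (H.dist u v : ℕ∞)) →
      (∀ T' : SimpleGraph V, T' < T →
        ¬ (∀ u v : V, wdist H ((⊥ : SimpleGraph V) ⊔ T') u v ≤
          (2 : ℕ∞) * (H.dist u v : ℕ∞))) →
      T ≤ H) := by
  constructor
  · intro T hTH
    rw [bot_sup_eq]
    constructor
    · intro hspan u v
      obtain ⟨hreach, hdist⟩ := hspan u v
      obtain ⟨p, hp⟩ := hreach.exists_walk_length_eq_dist
      calc wdist H T u v ≤ (walkWeight H T p : ℕ∞) := wdist_le_walk H T p
        _ = (T.dist u v : ℕ∞) := by rw [walkWeight_eq_length H hTH p, hp]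
        _ ≤ (2 : ℕ∞) * (H.dist u v : ℕ∞) := by
            rw [show (2 : ℕ∞) * (H.dist u v : ℕ∞) = ((2 * H.dist u v : ℕ) : ℕ∞) by push_cast; ring]
            exact_mod_cast hdist
    · intro hw u v
      have hne : wdist H T u v ≠ ⊤ := by
        intro htop
        have := hw u v
        rw [htop] at this
        have h2 : ((2 * H.dist u v : ℕ) : ℕ∞) < ⊤ := ENat.coe_lt_top _
        rw [show (2 : ℕ∞) * (H.dist u v : ℕ∞) = ((2 * H.dist u v : ℕ) : ℕ∞) by
          push_cast; ring] at this
        exact (ENat.coe_lt_top _).ne (top_le_iff.mp this)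
      obtain ⟨p, hp⟩ := wdist_exists H T hne
      refine ⟨p.reachable, ?_⟩
      have h1 : (T.dist u v : ℕ∞) ≤ (2 : ℕ∞) * (H.dist u v : ℕ∞) := by
        calc (T.dist u v : ℕ∞) ≤ (p.length : ℕ∞) := by exact_mod_cast SimpleGraph.dist_le p
          _ = (walkWeight H T p : ℕ∞) := by rw [walkWeight_eq_length H hTH p]
          _ = wdist H T u v := hp
          _ ≤ _ := hw u v
      rw [show (2 : ℕ∞) * (H.dist u v : ℕ∞) = ((2 * H.dist u v : ℕ) : ℕ∞) by
        push_cast; ring] at h1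
      exact_mod_cast h1
  · intro T hT hmin
    rw [bot_sup_eq] at hT
    by_contra hTH
    simp only [SimpleGraph.le_iff_adj] at hTH
    push_neg at hTH
    obtain ⟨p, q, hpq, hHpq⟩ := hTH
    set T' : SimpleGraph V := T.deleteEdges {s(p, q)} with hT'def
    have hT'lt : T' < T := by
      refine lt_of_le_of_ne (SimpleGraph.deleteEdges_le _) ?_
      intro heq
      have : T'.Adj p q := heq ▸ hpq
      rw [hT'def, SimpleGraph.deleteEdges_adj] at this
      exact this.2 (by simp)
    refine hmin T' hT'lt ?_
    rw [bot_sup_eq]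
    have hdpq : 2 ≤ H.dist p q := by
      have h0 : H.dist p q ≠ 0 := (hconn.pos_dist_of_ne hpq.ne).ne'
      have h1 : H.dist p q ≠ 1 := fun h => hHpq (SimpleGraph.dist_eq_one_iff_adj.mp h)
      omega
    refine wdist_le_two_mul H T' hconn ?_
    intro u v huv
    have h2 : wdist H T u v ≤ 2 := by
      have := hT u v
      rwa [SimpleGraph.dist_eq_one_iff_adj.mpr huv, Nat.cast_one, mul_one] at this
    have hne : wdist H T u v ≠ ⊤ := fun htop => by
      rw [htop] at h2
      exact absurd (top_le_iff.mp h2) (by decide)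
    obtain ⟨w, hw⟩ := wdist_exists H T hne
    have hw2 : walkWeight H T w ≤ 2 := by
      rw [← hw] at h2
      exact_mod_cast h2
    have hnotmem : s(p, q) ∉ w.edges := by
      intro hmem
      have := eq_single_edge H T hconn w hw2 hmem hdpq
      rw [Sym2.eq_iff] at this
      rcases this with ⟨rfl, rfl⟩ | ⟨rfl, rfl⟩
      · exact hHpq huv
      · exact hHpq huv.symm
    have hedges : ∀ e ∈ w.edges, e ∈ T'.edgeSet := by
      intro e he
      rw [hT'def, SimpleGraph.edgeSet_deleteEdges]
      refine ⟨w.edges_subset_edgeSet he, ?_⟩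
      intro h
      simp only [Set.mem_singleton_iff] at h
      exact hnotmem (h ▸ he)
    calc wdist H T' u v ≤ (walkWeight H T' (w.transfer T' hedges) : ℕ∞) :=
          wdist_le_walk H T' _
      _ = (walkWeight H T w : ℕ∞) := by rw [walkWeight_transfer]
      _ ≤ 2 := by exact_mod_cast hw2
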